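/- There do not exist real numbers 0 ≤ ν₁ ≤ ν₂ ≤ ν₃ ≤ ν₄ such that all νᵢ ∈ (1/4)ℤ, all the pairwise differences νᵢ − νⱼ lie in (1/2)ℤ, and ν₁ + ν₄ < 1, ν₂ + ν₃ < 1, ν₂ + ν₄ > 1. -/
import Mathlib


/-- 4A₁ in E₈: there are no 0 ≤ ν₁ ≤ ν₂ ≤ ν₃ ≤ ν₄ in (1/4)ℤ with all pairwise
differences in (1/2)ℤ, such that ν₁ + ν₄ < 1, ν₂ + ν₃ < 1 and ν₂ + ν₄ > 1. -/
theorem stmt_8 :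
    ¬ ∃ ν₁ ν₂ ν₃ ν₄ : ℝ, 0 ≤ ν₁ ∧ ν₁ ≤ ν₂ ∧ ν₂ ≤ ν₃ ∧ ν₃ ≤ ν₄ ∧
      (∃ m : ℤ, ν₁ = m / 4) ∧ (∃ m : ℤ, ν₂ = m / 4) ∧
      (∃ m : ℤ, ν₃ = m / 4) ∧ (∃ m : ℤ, ν₄ = m / 4) ∧
      (∃ m : ℤ, ν₁ - ν₂ = m / 2) ∧ (∃ m : ℤ, ν₁ - ν₃ = m / 2) ∧
      (∃ m : ℤ, ν₁ - ν₄ = m / 2) ∧ (∃ m : ℤ, ν₂ - ν₃ = m / 2) ∧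
      (∃ m : ℤ, ν₂ - ν₄ = m / 2) ∧ (∃ m : ℤ, ν₃ - ν₄ = m / 2) ∧
      ν₁ + ν₄ < 1 ∧ ν₂ + ν₃ < 1 ∧ 1 < ν₂ + ν₄ := by
  rintro ⟨ν₁, ν₂, ν₃, ν₄, h0, h12, h23, h34, ⟨a, ha⟩, ⟨b, hb⟩, ⟨c, hc⟩, ⟨d, hd⟩,
    -, -, -, -, -, -, p1, p2, p3⟩
  subst ha hb hc hd
  have had : a + d < 4 := by
    have : (a : ℝ) + d < 4 := by linarith
    exact_mod_cast this
  have hbd : 4 < b + d := by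
    have : (4 : ℝ) < b + d := by linarith
    exact_mod_cast this
  have hab : a + 2 ≤ b := by omega
  have hab' : (a : ℝ) + 2 ≤ b := by exact_mod_cast hab
  linarith
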